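/- Let α > 0 and μ > 0. Then for every t > 0, the function t ↦ E_{α,1}(−μ t^α) is differentiable at t and its derivative satisfies d/dt E_{α,1}(−μ t^α) = −μ t^{α−1} E_{α,α}(−μ t^α). -/

import Mathlib

open Filter Set

/-- Key summability estimate: for `α > 0` and `R ≥ 1`, the series
`∑ (k+1) Rᵏ / Γ(αk+1)` converges. -/
lemma summable_ml_aux {α R : ℝ} (hα : 0 < α) (hR : 1 ≤ R) :
    Summable (fun k : ℕ => ((k : ℝ) + 1) * R ^ k / Real.Gamma (α * k + 1)) := by
  set Q : ℝ := max 1 ((8 * R) ^ (1 / α)) with hQdef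
  have hQ1 : (1 : ℝ) ≤ Q := le_max_left _ _
  have hQ0 : (0 : ℝ) < Q := lt_of_lt_of_le one_pos hQ1
  have h8R : (0 : ℝ) < 8 * R := by nlinarith
  have hQα : 8 * R ≤ Q ^ α := by
    have h1 : ((8 * R) ^ (1 / α)) ^ α = 8 * R := by
      rw [← Real.rpow_mul h8R.le]
      rw [one_div_mul_cancel hα.ne', Real.rpow_one]
    calc 8 * R = ((8 * R) ^ (1 / α)) ^ α := h1.symm
      _ ≤ Q ^ α := Real.rpow_le_rpow (Real.rpow_nonneg h8R.le _) (le_max_right _ _) hα.le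
  -- eventually `Q^m ≤ m!`
  have hfac : ∀ᶠ m : ℕ in atTop, Q ^ m ≤ (Nat.factorial m : ℝ) := by
    have h := (FloorSemiring.tendsto_pow_div_factorial_atTop Q).eventually_le_const (by norm_num : (0:ℝ) < 1)
    filter_upwards [h] with m hm
    have hf : (0 : ℝ) < (Nat.factorial m : ℝ) := by positivity
    calc Q ^ m = (Q ^ m / m.factorial) * m.factorial := by field_simp
      _ ≤ 1 * m.factorial := by gcongr
      _ = m.factorial := one_mul _
  obtain ⟨M, hM⟩ := eventually_atTop.mp hfac
  -- eventual geometric bound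
  have hev : ∀ᶠ k : ℕ in atTop,
      ((k : ℝ) + 1) * R ^ k / Real.Gamma (α * k + 1) ≤ (1 / 2) ^ k := by
    have hαk : Tendsto (fun k : ℕ => α * k) atTop atTop :=
      (tendsto_natCast_atTop_atTop (R := ℝ)).const_mul_atTop hα
    have h2k : Tendsto (fun k : ℕ => (2 : ℝ) ^ k) atTop atTop :=
      tendsto_pow_atTop_atTop_of_one_lt (by norm_num)
    filter_upwards [hαk.eventually_ge_atTop ((M : ℝ) + 3),
        h2k.eventually_ge_atTop (Q ^ 2)] with k hk1 hk2
    set m : ℕ := ⌊α * k⌋₊ with hm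
    have hαk0 : (0 : ℝ) ≤ α * k := by positivity
    have hmle : (m : ℝ) ≤ α * k := Nat.floor_le hαk0
    have hmge : α * k - 1 < (m : ℝ) := Nat.sub_one_lt_floor _
    have hmM : M + 3 ≤ m := by
      have : ((M + 3 : ℕ) : ℝ) ≤ α * k := by push_cast; linarith
      exact Nat.le_floor this
    have hm1 : 1 ≤ m := le_trans (by omega) hmM
    -- Γ(αk+1) ≥ Γ(m) = (m-1)!
    have hΓmono : Real.Gamma m ≤ Real.Gamma (α * k + 1) := by
      have h2m : (2 : ℝ) ≤ (m : ℝ) := by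
        have : (2 : ℕ) ≤ m := by omega
        exact_mod_cast this
      exact Real.Gamma_strictMonoOn_Ici.monotoneOn (mem_Ici.mpr h2m)
        (mem_Ici.mpr (by linarith)) (by linarith)
    have hΓm : Real.Gamma m = ((m - 1).factorial : ℝ) := by
      have : ((m - 1 : ℕ) : ℝ) + 1 = (m : ℝ) := by
        have := Nat.sub_add_cancel hm1
        exact_mod_cast congrArg (Nat.cast : ℕ → ℝ) this
      rw [← this, Real.Gamma_nat_eq_factorial]
    have hfacm : Q ^ (m - 1) ≤ ((m - 1).factorial : ℝ) := hM (m - 1) (by omega)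
    -- Q^(αk - 2) ≤ Q^(m-1)
    have hm1cast : ((m - 1 : ℕ) : ℝ) = (m : ℝ) - 1 := by
      rw [Nat.cast_sub hm1, Nat.cast_one]
    have hexp : Q ^ (α * k - 2) ≤ Q ^ ((m - 1 : ℕ) : ℝ) :=
      Real.rpow_le_rpow_of_exponent_le hQ1 (by rw [hm1cast]; linarith)
    have hnatpow : Q ^ ((m - 1 : ℕ) : ℝ) = Q ^ (m - 1 : ℕ) := Real.rpow_natCast _ _
    -- Q^(αk-2) = (Q^α)^k / Q^2
    have hsplit : Q ^ (α * k - 2) = (Q ^ α) ^ k / Q ^ 2 := by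
      rw [Real.rpow_sub hQ0, Real.rpow_mul hQ0.le, Real.rpow_natCast, Real.rpow_two]
    have hΓlow : (8 * R) ^ k / Q ^ 2 ≤ Real.Gamma (α * k + 1) := by
      have h1 : (8 * R) ^ k / Q ^ 2 ≤ (Q ^ α) ^ k / Q ^ 2 := by
        gcongr
      calc (8 * R) ^ k / Q ^ 2 ≤ (Q ^ α) ^ k / Q ^ 2 := h1
        _ = Q ^ (α * k - 2) := hsplit.symm
        _ ≤ Q ^ (m - 1 : ℕ) := by rw [← hnatpow]; exact hexp
        _ ≤ ((m - 1).factorial : ℝ) := hfacm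
        _ = Real.Gamma m := hΓm.symm
        _ ≤ Real.Gamma (α * k + 1) := hΓmono
    have hΓpos : 0 < Real.Gamma (α * k + 1) := Real.Gamma_pos_of_pos (by positivity)
    have hLpos : (0 : ℝ) < (8 * R) ^ k / Q ^ 2 := by positivity
    have hk1le : ((k : ℝ) + 1) ≤ 2 ^ k := by
      have := Nat.lt_two_pow_self (n := k)
      have h : ((k + 1 : ℕ) : ℝ) ≤ ((2 ^ k : ℕ) : ℝ) := by exact_mod_cast this
      push_cast at h; linarith
    have hR0 : (0 : ℝ) < R := lt_of_lt_of_le one_pos hR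
    calc ((k : ℝ) + 1) * R ^ k / Real.Gamma (α * k + 1)
        ≤ ((k : ℝ) + 1) * R ^ k / ((8 * R) ^ k / Q ^ 2) := by
          gcongr
      _ = Q ^ 2 * (((k : ℝ) + 1) / 8 ^ k) := by
          rw [mul_pow]
          field_simp
      _ ≤ 2 ^ k * (2 ^ k / 8 ^ k) := by gcongr
      _ = (1 / 2) ^ k := by
          rw [← div_pow, ← mul_pow]
          norm_num
  -- conclude
  have hgeo : Summable (fun k : ℕ => ((1 : ℝ) / 2) ^ k) :=
    summable_geometric_of_lt_one (by norm_num) (by norm_num)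
  refine summable_of_isBigO_nat hgeo (Asymptotics.IsBigO.of_bound 1 ?_)
  filter_upwards [hev] with k hk
  have hΓpos : 0 < Real.Gamma (α * k + 1) := Real.Gamma_pos_of_pos (by positivity)
  have h0 : (0 : ℝ) ≤ ((k : ℝ) + 1) * R ^ k / Real.Gamma (α * k + 1) := by positivity
  rw [Real.norm_eq_abs, Real.norm_eq_abs, abs_of_nonneg h0, abs_of_nonneg (by positivity)]
  linarith

/-- The real Mittag-Leffler function `E_{α,β}(x) = ∑ₖ xᵏ / Γ(αk + β)` (with the
convention that `1/Γ` vanishes at the poles of `Γ`, which holds for Mathlib's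
`Real.Gamma` since it vanishes at nonpositive integers). -/
noncomputable def mittagLefflerReal (α β x : ℝ) : ℝ :=
  ∑' k : ℕ, x ^ k / Real.Gamma (α * k + β)

/-- For `α > 0`, `μ > 0` and `t > 0`, the function `t ↦ E_{α,1}(−μ tᵅ)` is
differentiable at `t` with derivative `−μ t^{α−1} E_{α,α}(−μ tᵅ)`. -/
theorem mittagLeffler_hasDerivAt (α μ : ℝ) (hα : 0 < α) (hμ : 0 < μ)
    (t : ℝ) (ht : 0 < t) :
    HasDerivAt (fun τ : ℝ => mittagLefflerReal α 1 (-μ * τ ^ α))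
      (-μ * t ^ (α - 1) * mittagLefflerReal α α (-μ * t ^ α)) t := by
  set R : ℝ := max 1 (μ * (2 * t) ^ α) with hRdef
  have hR1 : (1 : ℝ) ≤ R := le_max_left _ _
  set M : ℝ := (2 * t) ^ α / (t / 2) with hMdef
  have hM0 : 0 < M := by
    apply div_pos (Real.rpow_pos_of_pos (by linarith) _) (by linarith)
  set g : ℕ → ℝ → ℝ := fun k τ => (-μ * τ ^ α) ^ k / Real.Gamma (α * k + 1) with hg
  set g' : ℕ → ℝ → ℝ := fun k τ =>
    ((k : ℝ) * (-μ * τ ^ α) ^ (k - 1) * (-μ * (α * τ ^ (α - 1)))) / Real.Gamma (α * k + 1)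
    with hg'
  set u : ℕ → ℝ := fun k => (μ * α * M) * (((k : ℝ) + 1) * R ^ k / Real.Gamma (α * k + 1))
    with hu
  have hΓpos : ∀ k : ℕ, 0 < Real.Gamma (α * k + 1) := fun k =>
    Real.Gamma_pos_of_pos (by positivity)
  have husum : Summable u := (summable_ml_aux hα hR1).mul_left _
  have hs : IsOpen (Ioo (t / 2) (2 * t)) := isOpen_Ioo
  have hsc : IsPreconnected (Ioo (t / 2) (2 * t)) := isPreconnected_Ioo
  have hts : t ∈ Ioo (t / 2) (2 * t) := ⟨by linarith, by linarith⟩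
  -- derivatives on the set
  have hderiv : ∀ (k : ℕ) (τ : ℝ), τ ∈ Ioo (t / 2) (2 * t) → HasDerivAt (g k) (g' k τ) τ := by
    intro k τ hτ
    have hτ0 : 0 < τ := lt_trans (by linarith) hτ.1
    have h1 : HasDerivAt (fun x : ℝ => x ^ α) (α * τ ^ (α - 1)) τ :=
      Real.hasDerivAt_rpow_const (Or.inl hτ0.ne')
    have h2 := h1.const_mul (-μ)
    exact ((h2.pow k).div_const _)
  -- bound on the derivatives
  have hbound : ∀ (k : ℕ) (τ : ℝ), τ ∈ Ioo (t / 2) (2 * t) → ‖g' k τ‖ ≤ u k := by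
    intro k τ hτ
    have hτ0 : 0 < τ := lt_trans (by linarith) hτ.1
    have hτα : τ ^ α ≤ (2 * t) ^ α := Real.rpow_le_rpow hτ0.le hτ.2.le hα.le
    have hτα0 : (0 : ℝ) ≤ τ ^ α := Real.rpow_nonneg hτ0.le _
    have hτα1 : τ ^ (α - 1) ≤ M := by
      rw [Real.rpow_sub hτ0, Real.rpow_one]
      exact div_le_div₀ (Real.rpow_nonneg (by linarith) _) hτα (by linarith) hτ.1.le
    have hτα1' : (0 : ℝ) ≤ τ ^ (α - 1) := Real.rpow_nonneg hτ0.le _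
    have hRτ : μ * τ ^ α ≤ R := le_trans (by nlinarith) (le_max_right _ _)
    have habs : ‖g' k τ‖ =
        ((k : ℝ) * (μ * τ ^ α) ^ (k - 1) * (μ * (α * τ ^ (α - 1)))) /
          Real.Gamma (α * k + 1) := by
      simp only [hg', Real.norm_eq_abs, abs_div, abs_mul, abs_pow, abs_neg, Nat.abs_cast,
        abs_of_pos (hΓpos k), abs_of_nonneg hμ.le, abs_of_nonneg hτα0, abs_of_nonneg hα.le,
        abs_of_nonneg hτα1']
    rw [habs, hu]
    have hnum : (k : ℝ) * (μ * τ ^ α) ^ (k - 1) * (μ * (α * τ ^ (α - 1))) ≤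
        ((k : ℝ) + 1) * R ^ k * (μ * α * M) := by
      have h1 : (μ * τ ^ α) ^ (k - 1) ≤ R ^ (k - 1) :=
        pow_le_pow_left₀ (by positivity) hRτ _
      have h2 : R ^ (k - 1) ≤ R ^ k := pow_le_pow_right₀ hR1 (Nat.sub_le _ _)
      have h3 : μ * (α * τ ^ (α - 1)) ≤ μ * α * M := by
        rw [← mul_assoc]; exact mul_le_mul_of_nonneg_left hτα1 (by positivity)
      have hA : (k : ℝ) * (μ * τ ^ α) ^ (k - 1) ≤ ((k : ℝ) + 1) * R ^ k :=
        mul_le_mul (by linarith [Nat.cast_nonneg (α := ℝ) k]) (le_trans h1 h2)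
          (by positivity) (by positivity)
      exact mul_le_mul hA h3 (by positivity) (by positivity)
    calc ((k : ℝ) * (μ * τ ^ α) ^ (k - 1) * (μ * (α * τ ^ (α - 1)))) / Real.Gamma (α * k + 1)
        ≤ (((k : ℝ) + 1) * R ^ k * (μ * α * M)) / Real.Gamma (α * k + 1) :=
          by gcongr
      _ = μ * α * M * (((k : ℝ) + 1) * R ^ k / Real.Gamma (α * k + 1)) := by ring
  -- summability at t
  have hg0 : Summable (fun k => g k t) := by
    apply Summable.of_norm_bounded (summable_ml_aux hα hR1)
    intro k
    have hτα0 : (0 : ℝ) ≤ t ^ α := Real.rpow_nonneg ht.le _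
    have hRt : μ * t ^ α ≤ R := by
      refine le_trans ?_ (le_max_right _ _)
      have : t ^ α ≤ (2 * t) ^ α := Real.rpow_le_rpow ht.le (by linarith) hα.le
      nlinarith
    rw [hg, Real.norm_eq_abs, abs_div, abs_of_pos (hΓpos k), abs_pow, abs_mul, abs_neg,
      abs_of_nonneg hμ.le, abs_of_nonneg hτα0]
    have h1 : (μ * t ^ α) ^ k ≤ R ^ k := pow_le_pow_left₀ (by positivity) hRt _
    have h2 : R ^ k ≤ ((k : ℝ) + 1) * R ^ k := by
      nlinarith [pow_pos (lt_of_lt_of_le one_pos hR1) k, Nat.cast_nonneg (α := ℝ) k]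
    apply div_le_div₀ (by positivity) (le_trans h1 h2) (hΓpos k) le_rfl
  have H := hasDerivAt_tsum_of_isPreconnected husum hs hsc hderiv hbound hts hg0 hts
  have hkey : -μ * t ^ (α - 1) * mittagLefflerReal α α (-μ * t ^ α) = ∑' k, g' k t := by
    have hsum' : Summable (fun k => g' k t) :=
      Summable.of_norm_bounded husum (fun k => hbound k t hts)
    rw [hsum'.tsum_eq_zero_add]
    have h0 : g' 0 t = 0 := by simp [hg']
    rw [h0, zero_add]
    have hterm : ∀ k : ℕ, g' (k + 1) t =
        (-μ * t ^ (α - 1)) * ((-μ * t ^ α) ^ k / Real.Gamma (α * k + α)) := by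
      intro k
      have hΓα : (0 : ℝ) < α * k + α := by positivity
      have hΓne : Real.Gamma (α * k + α) ≠ 0 := (Real.Gamma_pos_of_pos hΓα).ne'
      have hΓeq : Real.Gamma (α * ((k : ℝ) + 1) + 1) = (α * k + α) * Real.Gamma (α * k + α) := by
        rw [show α * ((k : ℝ) + 1) + 1 = (α * k + α) + 1 by ring,
          Real.Gamma_add_one hΓα.ne']
      simp only [hg', Nat.add_sub_cancel, Nat.cast_add, Nat.cast_one]
      rw [hΓeq]
      field_simp
    rw [tsum_congr hterm, tsum_mul_left, mittagLefflerReal]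
  rw [hkey]
  have : (fun τ : ℝ => mittagLefflerReal α 1 (-μ * τ ^ α)) = fun z => ∑' k, g k z := by
    funext z
    rw [mittagLefflerReal, hg]
  rw [this]
  exact H
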